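/- Let A ∈ ℝ^{n×n}, and let B = (A + Aᵀ)/2 and C = (A − Aᵀ)/2 be the symmetric and skew-symmetric parts of A. Let B = U·H be a polar decomposition of B, with U orthogonal and H positive semidefinite. Then X_F = (B + H)/2 is the unique nearest positive semidefinite matrix to A in the Frobenius norm, i.e. X_F is symmetric positive semidefinite, ‖A − X_F‖_F ≤ ‖A − X‖_F for every symmetric positive semidefinite X, with equality only for X = X_F; moreover the squared Frobenius distance from A to the positive semidefinite cone equals ρ²_F(A) = Σ_{i : σ_i(B) < 0} σ_i(B)² + ‖C‖²_F, where σ_1(B),…,σ_n(B) are the eigenvalues of B. -/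

import Mathlib

open Matrix

/-- Squared Frobenius norm of a real matrix. -/
noncomputable def frobSq {n : ℕ} (M : Matrix (Fin n) (Fin n) ℝ) : ℝ :=
  ∑ a, ∑ b, (M a b) ^ 2

/-- The Frobenius norm of a real matrix. -/
noncomputable def frobNorm {n : ℕ} (M : Matrix (Fin n) (Fin n) ℝ) : ℝ :=
  Real.sqrt (frobSq M)

lemma frobSq_nonneg {n : ℕ} (M : Matrix (Fin n) (Fin n) ℝ) : 0 ≤ frobSq M :=
  Finset.sum_nonneg fun _ _ => Finset.sum_nonneg fun _ _ => sq_nonneg _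

lemma frobSq_eq_trace {n : ℕ} (M : Matrix (Fin n) (Fin n) ℝ) :
    frobSq M = trace (Mᵀ * M) := by
  simp only [frobSq, Matrix.trace, Matrix.diag, Matrix.mul_apply, Matrix.transpose_apply, sq]
  rw [Finset.sum_comm]

lemma frobSq_eq_zero {n : ℕ} {M : Matrix (Fin n) (Fin n) ℝ} (h : frobSq M = 0) : M = 0 := by
  ext a b
  have h1 := (Finset.sum_eq_zero_iff_of_nonneg
    (fun a _ => Finset.sum_nonneg fun b _ => sq_nonneg (M a b))).mp h a (Finset.mem_univ a)
  have h2 := (Finset.sum_eq_zero_iff_of_nonneg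
    (fun b _ => sq_nonneg (M a b))).mp h1 b (Finset.mem_univ b)
  simpa using sq_eq_zero_iff.mp h2

lemma frobSq_conj {n : ℕ} (Q M : Matrix (Fin n) (Fin n) ℝ)
    (h2 : Q * Qᵀ = 1) : frobSq (Qᵀ * M * Q) = frobSq M := by
  rw [frobSq_eq_trace, frobSq_eq_trace]
  have e : (Qᵀ * M * Q)ᵀ * (Qᵀ * M * Q) = Qᵀ * (Mᵀ * M) * Q := by
    simp only [Matrix.transpose_mul, Matrix.transpose_transpose, Matrix.mul_assoc]
    rw [← Matrix.mul_assoc Q Qᵀ, h2, Matrix.one_mul]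
  rw [e, Matrix.trace_mul_cycle, ← Matrix.mul_assoc, h2, Matrix.one_mul]

lemma frobSq_add_sym_skew {n : ℕ} (S K : Matrix (Fin n) (Fin n) ℝ)
    (hS : Sᵀ = S) (hK : Kᵀ = -K) : frobSq (S + K) = frobSq S + frobSq K := by
  rw [frobSq_eq_trace, frobSq_eq_trace, frobSq_eq_trace]
  have e : (S + K)ᵀ * (S + K) = (Sᵀ * S + Kᵀ * K) + (S * K - K * S) := by
    rw [Matrix.transpose_add, hS, hK]
    noncomm_ring
  rw [e]
  simp [Matrix.trace_add, Matrix.trace_sub, Matrix.trace_mul_comm S K]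

open scoped Classical in
lemma key_identity {n : ℕ} (d : Fin n → ℝ) (Y : Matrix (Fin n) (Fin n) ℝ) :
    frobSq (diagonal d - Y) = frobSq (diagonal (fun i => max (d i) 0) - Y)
      + ∑ i, (if d i < 0 then d i ^ 2 - 2 * d i * Y i i else 0) := by
  unfold frobSq
  rw [← Finset.sum_add_distrib]
  refine Finset.sum_congr rfl fun a _ => ?_
  have key : ∀ b, (diagonal d - Y) a b ^ 2 =
      (diagonal (fun i => max (d i) 0) - Y) a b ^ 2
        + (if b = a then (if d a < 0 then d a ^ 2 - 2 * d a * Y a a else 0) else 0) := by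
    intro b
    by_cases hb : b = a
    · subst hb
      by_cases hd : d b < 0
      · simp only [Matrix.sub_apply, Matrix.diagonal_apply_eq, hd, if_true,
          max_eq_right hd.le]
        ring
      · simp [Matrix.sub_apply, hd]
        rw [max_eq_left (not_lt.mp hd)]
    · have hab : a ≠ b := fun h => hb h.symm
      simp [Matrix.sub_apply, Matrix.diagonal_apply_ne _ hab, hb]
  rw [Finset.sum_congr rfl fun b _ => key b, Finset.sum_add_distrib]
  simp

lemma psd_diag_nonneg {n : ℕ} {Y : Matrix (Fin n) (Fin n) ℝ} (hY : Y.PosSemidef) (i : Fin n) :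
    0 ≤ Y i i := by
  exact hY.diag_nonneg

open scoped Classical in
/-- let `A ∈ ℝ^{n×n}`, `B = (A + Aᵀ)/2`, `C = (A − Aᵀ)/2`, and let
`B = U·H` be a polar decomposition (`U` orthogonal, `H` positive semidefinite).
Then `X_F = (B + H)/2` is the unique nearest positive semidefinite matrix to `A`
in the Frobenius norm, and the squared distance from `A` to the PSD cone equals
`ρ²_F(A) = Σ_{i : σ_i(B) < 0} σ_i(B)² + ‖C‖²_F`, where `σ_i(B)` are the
eigenvalues of (the symmetric matrix) `B`. -/
theorem nearest_psd_via_polar {n : ℕ} (A B C U H X_F : Matrix (Fin n) (Fin n) ℝ)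
    (hB : B = (1 / 2 : ℝ) • (A + Aᵀ)) (hC : C = (1 / 2 : ℝ) • (A - Aᵀ))
    (hBherm : B.IsHermitian)
    (hU : Uᵀ * U = 1) (hH : H.PosSemidef) (hpolar : B = U * H)
    (hXF : X_F = (1 / 2 : ℝ) • (B + H)) :
    X_F.PosSemidef ∧
    (∀ X : Matrix (Fin n) (Fin n) ℝ, X.PosSemidef →
      frobNorm (A - X_F) ≤ frobNorm (A - X)) ∧
    (∀ X : Matrix (Fin n) (Fin n) ℝ, X.PosSemidef →
      frobNorm (A - X_F) = frobNorm (A - X) → X = X_F) ∧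
    frobSq (A - X_F)
      = (∑ i, if hBherm.eigenvalues i < 0 then (hBherm.eigenvalues i) ^ 2 else 0)
        + frobSq C := by
  set d := hBherm.eigenvalues with hd
  set Q : Matrix (Fin n) (Fin n) ℝ :=
    (hBherm.eigenvectorUnitary : Matrix (Fin n) (Fin n) ℝ) with hQ
  have hstar : star Q = Qᵀ := by
    rw [Matrix.star_eq_conjTranspose, Matrix.conjTranspose_eq_transpose_of_trivial]
  have hQ1 : Qᵀ * Q = 1 := by
    rw [← hstar]; exact Matrix.mem_unitaryGroup_iff'.mp (hBherm.eigenvectorUnitary).2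
  have hQ2 : Q * Qᵀ = 1 := by
    rw [← hstar]; exact Matrix.mem_unitaryGroup_iff.mp (hBherm.eigenvectorUnitary).2
  have spec : B = Q * diagonal d * Qᵀ := by
    rw [← hstar]
    have := hBherm.spectral_theorem
    rwa [show (RCLike.ofReal ∘ hBherm.eigenvalues : Fin n → ℝ) = d from rfl] at this
  have hBt : Bᵀ = B := by
    have := hBherm
    rwa [Matrix.IsHermitian, Matrix.conjTranspose_eq_transpose_of_trivial] at this
  have hHt : Hᵀ = H := by
    have := hH.isHermitian
    rwa [Matrix.IsHermitian, Matrix.conjTranspose_eq_transpose_of_trivial] at this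
  have conj_back : ∀ Z : Matrix (Fin n) (Fin n) ℝ, Qᵀ * (Q * Z * Qᵀ) * Q = Z := by
    intro Z
    calc Qᵀ * (Q * Z * Qᵀ) * Q = Qᵀ * Q * Z * (Qᵀ * Q) := by simp only [Matrix.mul_assoc]
      _ = Z := by rw [hQ1]; simp
  have conj_fwd : ∀ Z : Matrix (Fin n) (Fin n) ℝ, Q * (Qᵀ * Z * Q) * Qᵀ = Z := by
    intro Z
    calc Q * (Qᵀ * Z * Q) * Qᵀ = Q * Qᵀ * Z * (Q * Qᵀ) := by simp only [Matrix.mul_assoc]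
      _ = Z := by rw [hQ2]; simp
  have diagmul : ∀ f g : Fin n → ℝ,
      (Q * diagonal f * Qᵀ) * (Q * diagonal g * Qᵀ)
        = Q * diagonal (fun i => f i * g i) * Qᵀ := by
    intro f g
    have : (Q * diagonal f * Qᵀ) * (Q * diagonal g * Qᵀ)
        = Q * (diagonal f * diagonal g) * Qᵀ := by
      simp only [Matrix.mul_assoc]
      rw [← Matrix.mul_assoc Qᵀ Q, hQ1, Matrix.one_mul]
    rw [this, Matrix.diagonal_mul_diagonal]
  set N : Matrix (Fin n) (Fin n) ℝ := Q * diagonal (fun i => |d i|) * Qᵀ with hNdef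
  have hNpsd : N.PosSemidef := by
    have h0 : Matrix.PosSemidef (diagonal (fun i => |d i|)) :=
      Matrix.PosSemidef.diagonal (fun i => abs_nonneg _)
    have := h0.mul_mul_conjTranspose_same Q
    rwa [Matrix.conjTranspose_eq_transpose_of_trivial] at this
  have hBsq : B * B = Q * diagonal (fun i => d i * d i) * Qᵀ := by
    rw [spec, diagmul]
  have habs : (fun i => |d i| * |d i|) = fun i : Fin n => d i * d i := by
    funext i; exact abs_mul_abs_self _
  have hNsq : N * N = Q * diagonal (fun i => d i * d i) * Qᵀ := by
    rw [hNdef, diagmul, habs]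
  have hHB : H * H = B * B := by
    calc H * H = Hᵀ * H := by rw [hHt]
      _ = Hᵀ * (Uᵀ * U) * H := by rw [hU, Matrix.mul_one]
      _ = (U * H)ᵀ * (U * H) := by
          simp only [Matrix.transpose_mul, Matrix.mul_assoc]
      _ = Bᵀ * B := by rw [← hpolar]
      _ = B * B := by rw [hBt]
  have hHN : H = N :=
    open scoped MatrixOrder in (CFC.sq_eq_sq_iff H N hH.nonneg hNpsd.nonneg).mp (by rw [pow_two, pow_two, hHB, hBsq, ← hNsq])
  set m : Fin n → ℝ := fun i => max (d i) 0 with hm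
  have e1 : diagonal d + diagonal (fun i => |d i|) = (2 : ℝ) • diagonal m := by
    ext i j
    rcases eq_or_ne i j with rfl | hij
    · simp only [Matrix.add_apply, Matrix.smul_apply, Matrix.diagonal_apply_eq,
        smul_eq_mul, hm]
      rcases le_or_gt 0 (d i) with h | h
      · rw [max_eq_left h, abs_of_nonneg h]; ring
      · rw [max_eq_right h.le, abs_of_neg h]; ring
    · simp [Matrix.diagonal_apply_ne _ hij]
  have hXF' : X_F = Q * diagonal m * Qᵀ := by
    rw [hXF, hHN, hNdef, spec, ← Matrix.add_mul, ← Matrix.mul_add, e1,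
      Matrix.mul_smul, Matrix.smul_mul, smul_smul]
    norm_num
  have hXFpsd : X_F.PosSemidef := by
    rw [hXF']
    have h0 : Matrix.PosSemidef (diagonal m) :=
      Matrix.PosSemidef.diagonal (fun i => le_max_right _ _)
    have := h0.mul_mul_conjTranspose_same Q
    rwa [Matrix.conjTranspose_eq_transpose_of_trivial] at this
  have hACdecomp : A = B + C := by rw [hB, hC]; module
  have hCt : Cᵀ = -C := by
    rw [hC, Matrix.transpose_smul, Matrix.transpose_sub, Matrix.transpose_transpose]
    module
  have key : ∀ X : Matrix (Fin n) (Fin n) ℝ, X.PosSemidef →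
      frobSq (A - X) = frobSq (diagonal m - (Qᵀ * X * Q))
        + (∑ i, if d i < 0 then d i ^ 2 - 2 * d i * (Qᵀ * X * Q) i i else 0)
        + frobSq C := by
    intro X hX
    have hXt : Xᵀ = X := by
      have := hX.isHermitian
      rwa [Matrix.IsHermitian, Matrix.conjTranspose_eq_transpose_of_trivial] at this
    have h1 : A - X = (B - X) + C := by rw [hACdecomp]; abel
    have h2 : (B - X)ᵀ = B - X := by rw [Matrix.transpose_sub, hBt, hXt]
    rw [h1, frobSq_add_sym_skew _ _ h2 hCt]
    have h3 : Qᵀ * (B - X) * Q = diagonal d - Qᵀ * X * Q := by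
      rw [Matrix.mul_sub, Matrix.sub_mul]
      congr 1
      conv_lhs => rw [spec]
      exact conj_back _
    rw [← frobSq_conj Q (B - X) hQ2, h3, key_identity]
  have hYF : Qᵀ * X_F * Q = diagonal m := by rw [hXF']; exact conj_back _
  have hsum_eval : ∀ i : Fin n,
      (if d i < 0 then d i ^ 2 - 2 * d i * (diagonal m) i i else 0)
        = (if d i < 0 then d i ^ 2 else 0) := by
    intro i
    by_cases hdi : d i < 0
    · simp only [hdi, if_true, Matrix.diagonal_apply_eq]
      have : m i = 0 := max_eq_right hdi.le
      rw [this]; ring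
    · simp [hdi]
  have hval : frobSq (A - X_F)
      = (∑ i, if d i < 0 then d i ^ 2 else 0) + frobSq C := by
    rw [key X_F hXFpsd, hYF, sub_self, Finset.sum_congr rfl fun i _ => hsum_eval i]
    have : frobSq (0 : Matrix (Fin n) (Fin n) ℝ) = 0 := by simp [frobSq]
    rw [this, zero_add]
  have main : ∀ X : Matrix (Fin n) (Fin n) ℝ, X.PosSemidef →
      frobSq (A - X_F) ≤ frobSq (A - X) ∧
        (frobSq (A - X_F) = frobSq (A - X) → X = X_F) := by
    intro X hX
    have hYpsd : (Qᵀ * X * Q).PosSemidef := by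
      have := hX.mul_mul_conjTranspose_same Qᵀ
      rwa [Matrix.conjTranspose_eq_transpose_of_trivial, Matrix.transpose_transpose] at this
    have hsum : (∑ i, if d i < 0 then d i ^ 2 else 0)
        ≤ ∑ i, if d i < 0 then d i ^ 2 - 2 * d i * (Qᵀ * X * Q) i i else 0 := by
      apply Finset.sum_le_sum
      intro i _
      by_cases hdi : d i < 0
      · simp only [hdi, if_true]
        have h0 := psd_diag_nonneg hYpsd i
        nlinarith
      · simp [hdi]
    have hkey := key X hX
    constructor
    · rw [hval, hkey]
      linarith [frobSq_nonneg (diagonal m - (Qᵀ * X * Q))]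
    · intro hsq
      rw [hval, hkey] at hsq
      have h0 : frobSq (diagonal m - (Qᵀ * X * Q)) = 0 := by
        linarith [frobSq_nonneg (diagonal m - (Qᵀ * X * Q))]
      have h1 : Qᵀ * X * Q = diagonal m := (sub_eq_zero.mp (frobSq_eq_zero h0)).symm
      have h2 : X = Q * (Qᵀ * X * Q) * Qᵀ := (conj_fwd X).symm
      rw [h1] at h2
      rw [hXF']
      exact h2
  refine ⟨hXFpsd, ?_, ?_, hval⟩
  · intro X hX
    exact Real.sqrt_le_sqrt (main X hX).1
  · intro X hX heq
    apply (main X hX).2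
    have h1 : Real.sqrt (frobSq (A - X_F)) = Real.sqrt (frobSq (A - X)) := heq
    calc frobSq (A - X_F) = Real.sqrt (frobSq (A - X_F)) ^ 2 :=
          (Real.sq_sqrt (frobSq_nonneg _)).symm
      _ = Real.sqrt (frobSq (A - X)) ^ 2 := by rw [h1]
      _ = frobSq (A - X) := Real.sq_sqrt (frobSq_nonneg _)
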